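/- Let m be a positive integer and a an integer coprime to m, and let π_a(m) be the permutation of Z/mZ given by x ↦ ax. If m is odd, the sign of π_a(m) equals the Jacobi symbol (a/m). -/

import Mathlib

open Equiv Equiv.Perm

-- sign of x ↦ x * g on a finite group
lemma sign_mulRight_eq {G : Type*} [Group G] [Fintype G] [DecidableEq G] (g : G) :
    sign (Equiv.mulRight g) =
      ((-1 : ℤˣ) ^ (orderOf g - 1)) ^ (Fintype.card G / orderOf g) := by
  classical
  set H := Subgroup.zpowers g with hH
  have hgH : g ∈ H := Subgroup.mem_zpowers g
  have hd0 : 0 < orderOf g := orderOf_pos g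
  set τ : Perm H := Equiv.mulRight (⟨g, hgH⟩ : H) with hτ
  have hsτ : sign τ = (-1 : ℤˣ) ^ (orderOf g - 1) := by
    have hfin : IsOfFinOrder g := isOfFinOrder_of_finite g
    obtain ⟨d', hd'⟩ : ∃ d', orderOf g = d' + 1 :=
      ⟨orderOf g - 1, (Nat.succ_pred_eq_of_pos hd0).symm⟩
    have key : sign (finRotate (orderOf g)) = sign τ := by
      refine sign_eq_sign_of_equiv _ _ (finEquivZPowers hfin) ?_
      have hgen : ∀ j : ℕ, g ^ ((j + 1) % (d' + 1)) = g ^ j * g := by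
        intro j
        rw [← hd', pow_mod_orderOf, pow_succ]
      intro i
      ext
      show g ^ ((finRotate (orderOf g) i : ℕ)) = (g ^ (i : ℕ)) * g
      have hco : ((finRotate (orderOf g) i : ℕ)) = ((i : ℕ) + 1) % (d' + 1) := by
        revert i
        rw [hd']
        intro i
        rw [finRotate_succ_apply]
        simp [Fin.add_def]
      rw [hco]
      exact hgen i
    rw [← key, hd', sign_finRotate]
  -- the equivalence G ≃ (G ⧸ H) × H
  letI : Fintype (G ⧸ H) := Fintype.ofFinite _
  letI : DecidableEq (G ⧸ H) := Classical.decEq _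
  let e2 : G ≃ (G ⧸ H) × H :=
    { toFun := fun x => (QuotientGroup.mk x,
        ⟨((Quotient.out (QuotientGroup.mk x : G ⧸ H)))⁻¹ * x, by
          rw [← QuotientGroup.eq]
          simp⟩)
      invFun := fun q => Quotient.out q.1 * (q.2 : G)
      left_inv := fun x => by simp
      right_inv := fun q => by
        obtain ⟨q1, h⟩ := q
        have h1 : (QuotientGroup.mk (Quotient.out q1 * (h : G)) : G ⧸ H) = q1 := by
          rw [QuotientGroup.mk_mul_of_mem _ h.2]
          simp
        refine Prod.ext (by simpa using h1) ?_
        ext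
        simp only
        rw [h1]
        group }
  have key2 : sign (Equiv.mulRight g) = sign (prodCongrRight (fun _ : G ⧸ H => τ)) := by
    refine sign_eq_sign_of_equiv _ _ e2 ?_
    intro x
    have h1 : (QuotientGroup.mk (x * g) : G ⧸ H) = QuotientGroup.mk x :=
      (QuotientGroup.mk_mul_of_mem x hgH)
    refine Prod.ext h1 ?_
    ext
    show ((Quotient.out (QuotientGroup.mk (x*g) : G ⧸ H)))⁻¹ * (x * g)
      = (((Quotient.out (QuotientGroup.mk x : G ⧸ H)))⁻¹ * x) * g
    rw [h1, mul_assoc]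
  rw [key2, sign_prodCongrRight]
  rw [Finset.prod_const, hsτ]
  congr 1
  rw [Finset.card_univ]
  have hc : Nat.card G = Nat.card (G ⧸ H) * Nat.card H :=
    Subgroup.card_eq_card_quotient_mul_card_subgroup H
  have hH' : Nat.card H = orderOf g := Nat.card_zpowers g
  rw [hH'] at hc
  rw [← Nat.card_eq_fintype_card, ← Nat.card_eq_fintype_card, hc,
    Nat.mul_div_cancel _ hd0]


lemma sign_mulRight_ite {G : Type*} [Group G] [Fintype G] [DecidableEq G] (g : G)
    (h2 : 2 ∣ Fintype.card G) :
    sign (Equiv.mulRight g) =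
      if g ^ (Fintype.card G / 2) = 1 then 1 else -1 := by
  rw [sign_mulRight_eq, ← pow_mul]
  have hd0 : 0 < orderOf g := orderOf_pos g
  have hdN : orderOf g ∣ Fintype.card G := orderOf_dvd_card
  have hiff : g ^ (Fintype.card G / 2) = 1 ↔ orderOf g ∣ Fintype.card G / 2 :=
    orderOf_dvd_iff_pow_eq_one.symm
  have key : Even ((orderOf g - 1) * (Fintype.card G / orderOf g)) ↔
      orderOf g ∣ Fintype.card G / 2 := by
    rcases Nat.even_or_odd (orderOf g) with he | ho
    · -- orderOf even : even prod ↔ card/orderOf even ↔ 2*orderOf ∣ card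
      have h1 : Odd (orderOf g - 1) := by
        rcases he with ⟨t, ht⟩
        refine ⟨t - 1, by omega⟩
      have e1 : Even ((orderOf g - 1) * (Fintype.card G / orderOf g)) ↔
          Even (Fintype.card G / orderOf g) := by
        rw [Nat.even_mul]
        simp [Nat.not_even_iff_odd.mpr h1]
      rw [e1, even_iff_two_dvd, Nat.dvd_div_iff_mul_dvd hdN,
        Nat.dvd_div_iff_mul_dvd h2, Nat.mul_comm]
    · have h1 : Even (orderOf g - 1) := by
        rcases ho with ⟨t, ht⟩
        exact ⟨t, by omega⟩
      have h2' : orderOf g ∣ Fintype.card G / 2 := by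
        have hnd : ¬ 2 ∣ orderOf g := by
          rcases ho with ⟨t, ht⟩
          omega
        have hcop : Nat.Coprime (orderOf g) 2 :=
          Nat.coprime_comm.mp ((Nat.prime_two.coprime_iff_not_dvd).mpr hnd)
        refine hcop.dvd_of_dvd_mul_left ?_
        calc orderOf g ∣ Fintype.card G := hdN
          _ = 2 * (Fintype.card G / 2) := (Nat.mul_div_cancel' h2).symm
      simp [h2', h1.mul_right]
  by_cases hc : g ^ (Fintype.card G / 2) = 1
  · rw [if_pos hc]
    rw [Even.neg_one_pow (key.mpr (hiff.mp hc))]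
  · rw [if_neg hc]
    have : ¬ Even ((orderOf g - 1) * (Fintype.card G / orderOf g)) :=
      fun h => hc (hiff.mpr (key.mp h))
    rw [Nat.not_even_iff_odd] at this
    rw [Odd.neg_one_pow this]

lemma sign_units_part (p k : ℕ) [hp : Fact p.Prime] (hp2 : p ≠ 2) (hk : k ≠ 0)
    (a : ℤ) (hu : IsUnit ((a : ZMod (p ^ k))))
    (σ : Perm {x : ZMod (p ^ k) // IsUnit x})
    (hσ : ∀ x : {x : ZMod (p ^ k) // IsUnit x},
      (σ x : ZMod (p ^ k)) = (a : ZMod (p ^ k)) * (x : ZMod (p ^ k))) :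
    (sign σ : ℤ) = legendreSym p a := by
  classical
  have hpk0 : p ^ k ≠ 0 := pow_ne_zero _ hp.out.pos.ne'
  haveI : NeZero (p ^ k) := ⟨hpk0⟩
  haveI : Fact (1 < p ^ k) := ⟨Nat.one_lt_pow hk hp.out.one_lt⟩
  have hodd : Odd p := hp.out.odd_of_ne_two hp2
  have hp2' : 2 < p := lt_of_le_of_ne hp.out.two_le (Ne.symm hp2)
  haveI : Fact (2 < p) := ⟨hp2'⟩
  -- transfer to the unit group
  set u : (ZMod (p ^ k))ˣ := hu.unit with hu'
  let e : (ZMod (p ^ k))ˣ ≃ {x : ZMod (p ^ k) // IsUnit x} :=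
    { toFun := fun v => ⟨(v : ZMod (p ^ k)), v.isUnit⟩
      invFun := fun x => x.2.unit
      left_inv := fun v => Units.ext v.isUnit.unit_spec
      right_inv := fun x => Subtype.ext x.2.unit_spec }
  have hsign : sign (Equiv.mulRight u) = sign σ := by
    refine sign_eq_sign_of_equiv _ _ e ?_
    intro v
    refine Subtype.ext ?_
    show ((v * u : (ZMod (p ^ k))ˣ) : ZMod (p ^ k)) = (σ (e v) : ZMod (p ^ k))
    rw [hσ (e v)]
    show (v : ZMod (p ^ k)) * (u : ZMod (p ^ k)) = _
    rw [IsUnit.unit_spec, mul_comm]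
    rfl
  have h2p1 : 2 ∣ p - 1 := by
    rcases hodd with ⟨t, ht⟩
    omega
  -- card computations
  have hcard : Fintype.card (ZMod (p ^ k))ˣ = p ^ (k - 1) * (p - 1) := by
    rw [ZMod.card_units_eq_totient, Nat.totient_prime_pow hp.out (Nat.pos_of_ne_zero hk)]
  have h2N : 2 ∣ Fintype.card (ZMod (p ^ k))ˣ := by
    rw [hcard]
    exact Dvd.dvd.mul_left h2p1 _
  have hhalf : Fintype.card (ZMod (p ^ k))ˣ / 2 = p ^ (k - 1) * ((p - 1) / 2) := by
    rw [hcard, Nat.mul_div_assoc _ h2p1]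
  -- legendre basics
  have hap : (a : ZMod p) ≠ 0 := by
    have : IsUnit (a : ZMod p) := by
      have := hu.map (ZMod.castHom (dvd_pow_self p hk) (ZMod p))
      rwa [map_intCast] at this
    exact this.ne_zero
  have hl := legendreSym.eq_one_or_neg_one p hap
  have hhp : (p - 1) / 2 = p / 2 := by rcases hodd with ⟨t, ht⟩; omega
  have hpow : ((legendreSym p a : ℤ) : ZMod p) = (a : ZMod p) ^ (p / 2) :=
    legendreSym.eq_pow p a
  have hne : (-1 : ZMod p) ≠ 1 := by
    intro h
    exact (CharP.neg_one_ne_one (ZMod p) p) h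
  have hcast : ((u ^ (Fintype.card (ZMod (p ^ k))ˣ / 2) : (ZMod (p ^ k))ˣ) : ZMod (p ^ k))
      = (a : ZMod (p ^ k)) ^ (Fintype.card (ZMod (p ^ k))ˣ / 2) := by
    rw [Units.val_pow_eq_pow_val, IsUnit.unit_spec]
  have hiff : u ^ (Fintype.card (ZMod (p ^ k))ˣ / 2) = 1 ↔ legendreSym p a = 1 := by
    constructor
    · intro h
      rcases hl with h1 | h1
      · exact h1
      · exfalso
        have hc : ((a : ZMod (p ^ k)) ^ (Fintype.card (ZMod (p ^ k))ˣ / 2)) = 1 := by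
          rw [← hcast, h, Units.val_one]
        have := congrArg (ZMod.castHom (dvd_pow_self p hk) (ZMod p)) hc
        rw [map_pow, map_one, map_intCast] at this
        rw [hhalf] at this
        have hmone : (a : ZMod p) ^ ((p - 1) / 2) = -1 := by
          have : (a : ZMod p) ^ (p / 2) = -1 := by rw [← hpow, h1]; norm_num
          rwa [hhp]
        rw [mul_comm, pow_mul, hmone] at this
        have hoddpow : Odd (p ^ (k - 1)) := hodd.pow
        rw [hoddpow.neg_one_pow] at this
        exact hne this
    · intro h1
      have ha1 : (a : ZMod p) ^ (p / 2) = 1 := by rw [← hpow, h1]; norm_num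
      -- lift to p^k via dvd_sub_pow_of_dvd_sub
      have hdvd : (p : ℤ) ∣ a ^ (p / 2) - 1 := by
        rwa [← ZMod.intCast_zmod_eq_zero_iff_dvd, Int.cast_sub, Int.cast_pow, Int.cast_one,
          sub_eq_zero]
      have hdvd2 := dvd_sub_pow_of_dvd_sub hdvd (k - 1)
      rw [(by omega : k - 1 + 1 = k), one_pow, ← pow_mul] at hdvd2
      have : ((a ^ (p / 2 * p ^ (k - 1)) - 1 : ℤ) : ZMod (p ^ k)) = 0 := by
        rw [ZMod.intCast_zmod_eq_zero_iff_dvd]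
        exact_mod_cast hdvd2
      rw [Int.cast_sub, Int.cast_pow, Int.cast_one, sub_eq_zero] at this
      refine Units.ext ?_
      rw [hcast, Units.val_one, hhalf, hhp, mul_comm]
      exact this
  rw [← hsign, sign_mulRight_ite u h2N]
  rcases hl with h1 | h1
  · rw [h1, if_pos (hiff.mpr h1)]
    rfl
  · have : ¬ u ^ (Fintype.card (ZMod (p ^ k))ˣ / 2) = 1 := by
      intro h
      rw [hiff.mp h] at h1
      omega
    rw [h1, if_neg this]
    rfl

lemma sign_prodCongr' {α β : Type*} [DecidableEq α] [Fintype α] [DecidableEq β] [Fintype β]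
    (e : Perm α) (f : Perm β) :
    sign (Equiv.prodCongr e f) = sign e ^ Fintype.card β * sign f ^ Fintype.card α := by
  have hdec : Equiv.prodCongr e f =
      (Equiv.prodCongrLeft fun _ : β => e) * (Equiv.prodCongrRight fun _ : α => f) := by
    ext x
    · rfl
    · rfl
  rw [hdec, map_mul, sign_prodCongrLeft, sign_prodCongrRight, Finset.prod_const,
    Finset.prod_const, Finset.card_univ, Finset.card_univ]

lemma nonunits_equiv (p k : ℕ) [hp : Fact p.Prime] :
    ∃ e : ZMod (p ^ k) ≃ {x : ZMod (p ^ (k + 1)) // ¬ IsUnit x},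
      ∀ x : ZMod (p ^ k),
        ((e x : ZMod (p ^ (k + 1))) : ZMod (p ^ (k + 1)))
          = (p : ZMod (p ^ (k + 1))) * ((x.val : ℕ) : ZMod (p ^ (k + 1))) := by
  classical
  haveI : NeZero (p ^ k) := ⟨pow_ne_zero _ hp.out.pos.ne'⟩
  haveI : NeZero (p ^ (k + 1)) := ⟨pow_ne_zero _ hp.out.pos.ne'⟩
  haveI : Fact (1 < p ^ (k + 1)) := ⟨Nat.one_lt_pow (Nat.succ_ne_zero k) hp.out.one_lt⟩
  have hpnu : ¬ IsUnit ((p : ZMod (p ^ (k + 1)))) := by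
    intro h
    obtain ⟨v, hv⟩ := h.exists_left_inv
    have : (1 : ZMod (p ^ (k + 1))) = 0 := by
      calc (1 : ZMod (p ^ (k + 1))) = 1 ^ (k + 1) := (one_pow _).symm
        _ = (v * p) ^ (k + 1) := by rw [hv]
        _ = v ^ (k + 1) * (p : ZMod (p ^ (k + 1))) ^ (k + 1) := mul_pow _ _ _
        _ = v ^ (k + 1) * ((p ^ (k + 1) : ℕ) : ZMod (p ^ (k + 1))) := by push_cast; ring
        _ = 0 := by rw [ZMod.natCast_self, mul_zero]
    have h1 : (1 : ZMod (p ^ (k + 1))) ≠ 0 := one_ne_zero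
    exact h1 this
  -- the map
  set f : ZMod (p ^ k) → {x : ZMod (p ^ (k + 1)) // ¬ IsUnit x} :=
    fun x => ⟨(p : ZMod (p ^ (k + 1))) * ((x.val : ℕ) : ZMod (p ^ (k + 1))),
      fun h => hpnu (isUnit_of_mul_isUnit_left h)⟩ with hf
  have hinj : Function.Injective f := by
    intro x y hxy
    have h1 : ((p * x.val : ℕ) : ZMod (p ^ (k + 1))) = ((p * y.val : ℕ) : ZMod (p ^ (k + 1))) := by
      push_cast
      exact congrArg Subtype.val hxy
    rw [ZMod.natCast_eq_natCast_iff, Nat.ModEq] at h1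
    have hx := ZMod.val_lt x
    have hy := ZMod.val_lt y
    rw [Nat.mod_eq_of_lt, Nat.mod_eq_of_lt] at h1
    · have : x.val = y.val := by
        have := Nat.eq_of_mul_eq_mul_left hp.out.pos h1
        exact this
      exact ZMod.val_injective _ this
    · rw [pow_succ, mul_comm (p ^ k) p]
      exact (Nat.mul_lt_mul_left hp.out.pos).mpr hy
    · rw [pow_succ, mul_comm (p ^ k) p]
      exact (Nat.mul_lt_mul_left hp.out.pos).mpr hx
  have hsurj : Function.Surjective f := by
    rintro ⟨y, hy⟩
    have hdvd : p ∣ y.val := by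
      by_contra hnd
      apply hy
      have hcop : Nat.Coprime y.val (p ^ (k + 1)) :=
        Nat.Coprime.pow_right _ (((Nat.Prime.coprime_iff_not_dvd hp.out).mpr hnd).symm)
      have := (ZMod.isUnit_iff_coprime y.val (p ^ (k + 1))).mpr hcop
      rwa [ZMod.natCast_val, ZMod.cast_id] at this
    obtain ⟨t, ht⟩ := hdvd
    have htlt : t < p ^ k := by
      have := ZMod.val_lt y
      rw [ht, pow_succ, mul_comm (p ^ k) p] at this
      exact Nat.lt_of_mul_lt_mul_left this
    refine ⟨(t : ZMod (p ^ k)), Subtype.ext ?_⟩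
    show (p : ZMod (p ^ (k + 1))) * (((t : ZMod (p ^ k)).val : ℕ) : ZMod (p ^ (k + 1))) = y
    rw [ZMod.val_natCast_of_lt htlt]
    have : ((p * t : ℕ) : ZMod (p ^ (k + 1))) = y := by
      rw [← ht, ZMod.natCast_val, ZMod.cast_id]
    push_cast at this
    exact this
  exact ⟨Equiv.ofBijective f ⟨hinj, hsurj⟩, fun x => by simp [hf, Equiv.ofBijective]⟩

lemma lift_compat (p k : ℕ) [hp : Fact p.Prime] (a : ℤ) (x : ZMod (p ^ k)) :
    (p : ZMod (p ^ (k + 1))) * ((((a : ZMod (p ^ k)) * x).val : ℕ) : ZMod (p ^ (k + 1)))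
      = (a : ZMod (p ^ (k + 1))) *
        ((p : ZMod (p ^ (k + 1))) * ((x.val : ℕ) : ZMod (p ^ (k + 1)))) := by
  haveI : NeZero (p ^ k) := ⟨pow_ne_zero _ hp.out.pos.ne'⟩
  haveI : NeZero (p ^ (k + 1)) := ⟨pow_ne_zero _ hp.out.pos.ne'⟩
  have h1 : ((((a : ZMod (p ^ k)) * x).val : ℤ) : ZMod (p ^ k))
      = ((a * (x.val : ℤ) : ℤ) : ZMod (p ^ k)) := by
    push_cast
    rw [ZMod.natCast_val, ZMod.cast_id, ZMod.natCast_val, ZMod.cast_id]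
  rw [ZMod.intCast_eq_intCast_iff] at h1
  have h2 : ((p ^ k : ℕ) : ℤ) ∣ (a * (x.val : ℤ) - (((a : ZMod (p ^ k)) * x).val : ℤ)) :=
    Int.ModEq.dvd h1
  have h3 : ((p ^ (k + 1) : ℕ) : ℤ) ∣
      ((p : ℤ) * (a * (x.val : ℤ)) - (p : ℤ) * (((a : ZMod (p ^ k)) * x).val : ℤ)) := by
    rw [← mul_sub]
    push_cast
    rw [pow_succ, mul_comm ((p : ℤ) ^ k) (p : ℤ)]
    exact mul_dvd_mul_left _ (by exact_mod_cast h2)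
  have h4 : (((p : ℤ) * (((a : ZMod (p ^ k)) * x).val : ℤ) : ℤ) : ZMod (p ^ (k + 1)))
      = (((p : ℤ) * (a * (x.val : ℤ)) : ℤ) : ZMod (p ^ (k + 1))) := by
    rw [ZMod.intCast_eq_intCast_iff]
    exact Int.modEq_iff_dvd.mpr h3
  push_cast at h4
  rw [h4]
  ring

lemma isUnit_of_isCoprime' {n : ℕ} (a : ℤ) (ha : IsCoprime a (n : ℤ)) :
    IsUnit ((a : ZMod n)) := by
  obtain ⟨u, v, huv⟩ := ha
  have := congrArg (fun z : ℤ => (z : ZMod n)) huv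
  push_cast at this
  rw [ZMod.natCast_self, mul_zero, add_zero] at this
  exact IsUnit.of_mul_eq_one _ (by rw [mul_comm] at this; exact this)

lemma units_pow_odd (u : ℤˣ) {t : ℕ} (ht : Odd t) : u ^ t = u := by
  rcases Int.units_eq_one_or u with rfl | rfl
  · rw [one_pow]
  · exact Odd.neg_one_pow ht

lemma pp_case (p k : ℕ) [hp : Fact p.Prime] (hp2 : p ≠ 2) (a : ℤ)
    (ha : IsCoprime a ((p ^ (k + 1) : ℕ) : ℤ))
    (π : Equiv.Perm (ZMod (p ^ (k + 1))))
    (hπ : ∀ x : ZMod (p ^ (k + 1)), π x = (a : ZMod (p ^ (k + 1))) * x)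
    (hrec : ∀ π' : Equiv.Perm (ZMod (p ^ k)),
      (∀ x : ZMod (p ^ k), π' x = (a : ZMod (p ^ k)) * x) →
      ((sign π' : ℤ) = jacobiSym a (p ^ k))) :
    (sign π : ℤ) = jacobiSym a (p ^ (k + 1)) := by
  classical
  haveI : NeZero (p ^ (k + 1)) := ⟨pow_ne_zero _ hp.out.pos.ne'⟩
  haveI : NeZero (p ^ k) := ⟨pow_ne_zero _ hp.out.pos.ne'⟩
  haveI : NeZero p := ⟨hp.out.pos.ne'⟩
  have hu : IsUnit ((a : ZMod (p ^ (k + 1)))) := isUnit_of_isCoprime' a ha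
  have hpred : ∀ x : ZMod (p ^ (k + 1)), IsUnit x ↔ IsUnit (π x) := by
    intro x
    rw [hπ]
    exact ⟨fun h => hu.mul h, fun h => isUnit_of_mul_isUnit_right h⟩
  set pu := π.subtypePerm (fun x => (hpred x).symm) with hpu
  set pn := π.subtypePerm (p := fun x => ¬ IsUnit x) (fun x => (not_congr (hpred x)).symm) with hpn
  have hdecomp : π = Equiv.Perm.subtypeCongr pu pn := by
    ext x
    by_cases h : IsUnit x
    · rw [Equiv.Perm.subtypeCongr.left_apply _ _ h]; rfl
    · rw [Equiv.Perm.subtypeCongr.right_apply _ _ h]; rfl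
  have hsu : (sign pu : ℤ) = legendreSym p a :=
    sign_units_part p (k + 1) hp2 (Nat.succ_ne_zero k) a hu pu (fun x => hπ x.1)
  obtain ⟨e, he⟩ := nonunits_equiv p k
  have hdvdpk : ((p ^ k : ℕ) : ℤ) ∣ ((p ^ (k + 1) : ℕ) : ℤ) := by
    exact_mod_cast Int.natCast_dvd_natCast.mpr (pow_dvd_pow p (Nat.le_succ k))
  have ha' : IsCoprime a ((p ^ k : ℕ) : ℤ) := IsCoprime.of_isCoprime_of_dvd_right ha hdvdpk
  have hu' : IsUnit ((a : ZMod (p ^ k))) := isUnit_of_isCoprime' a ha'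
  set π' : Equiv.Perm (ZMod (p ^ k)) := MulAction.toPerm hu'.unit with hπ'def
  have hπ' : ∀ x : ZMod (p ^ k), π' x = (a : ZMod (p ^ k)) * x := by
    intro x
    show (hu'.unit : ZMod (p ^ k)) * x = _
    rw [IsUnit.unit_spec]
  have hequiv : ∀ x, e (π' x) = pn (e x) := by
    intro x
    refine Subtype.ext ?_
    have hR : ((pn (e x)) : ZMod (p ^ (k + 1))) = π (e x) := rfl
    rw [hR, hπ, he, he, hπ' x]
    exact lift_compat p k a x
  have hsn : sign π' = sign pn := sign_eq_sign_of_equiv π' pn e hequiv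
  have hrecv : (sign π' : ℤ) = jacobiSym a (p ^ k) := hrec π' hπ'
  have hjac : jacobiSym a (p ^ (k + 1)) = legendreSym p a * jacobiSym a (p ^ k) := by
    have hps : p ^ (k + 1) = p * p ^ k := by ring
    rw [hps, jacobiSym.mul_right, jacobiSym.legendreSym.to_jacobiSym]
  rw [hdecomp, sign_subtypeCongr, Units.val_mul, hsu, hjac, ← hsn, hrecv]

lemma crt_case (n1 n2 : ℕ) [NeZero n1] [NeZero n2] (hco : n1.Coprime n2)
    (ho1 : Odd n1) (ho2 : Odd n2) (a : ℤ) (ha : IsCoprime a ((n1 * n2 : ℕ) : ℤ))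
    (π : Equiv.Perm (ZMod (n1 * n2)))
    (hπ : ∀ x : ZMod (n1 * n2), π x = (a : ZMod (n1 * n2)) * x)
    (hs1 : ∀ π1 : Equiv.Perm (ZMod n1), (∀ x : ZMod n1, π1 x = (a : ZMod n1) * x) →
      ((sign π1 : ℤ) = jacobiSym a n1))
    (hs2 : ∀ π2 : Equiv.Perm (ZMod n2), (∀ x : ZMod n2, π2 x = (a : ZMod n2) * x) →
      ((sign π2 : ℤ) = jacobiSym a n2)) :
    (sign π : ℤ) = jacobiSym a (n1 * n2) := by
  classical
  have hd1 : ((n1 : ℕ) : ℤ) ∣ ((n1 * n2 : ℕ) : ℤ) := by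
    exact_mod_cast Int.natCast_dvd_natCast.mpr (Dvd.intro n2 rfl)
  have hd2 : ((n2 : ℕ) : ℤ) ∣ ((n1 * n2 : ℕ) : ℤ) := by
    exact_mod_cast Int.natCast_dvd_natCast.mpr (Dvd.intro_left n1 rfl)
  have hu1 : IsUnit ((a : ZMod n1)) :=
    isUnit_of_isCoprime' a (IsCoprime.of_isCoprime_of_dvd_right ha hd1)
  have hu2 : IsUnit ((a : ZMod n2)) :=
    isUnit_of_isCoprime' a (IsCoprime.of_isCoprime_of_dvd_right ha hd2)
  set π1 : Equiv.Perm (ZMod n1) := MulAction.toPerm hu1.unit with hπ1def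
  set π2 : Equiv.Perm (ZMod n2) := MulAction.toPerm hu2.unit with hπ2def
  have hπ1 : ∀ x : ZMod n1, π1 x = (a : ZMod n1) * x := by
    intro x
    show (hu1.unit : ZMod n1) * x = _
    rw [IsUnit.unit_spec]
  have hπ2 : ∀ x : ZMod n2, π2 x = (a : ZMod n2) * x := by
    intro x
    show (hu2.unit : ZMod n2) * x = _
    rw [IsUnit.unit_spec]
  set re := ZMod.chineseRemainder hco with hre
  have hequiv : ∀ x, re.toEquiv (π x) = (Equiv.prodCongr π1 π2) (re.toEquiv x) := by
    intro x
    rw [hπ]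
    show re ((a : ZMod (n1 * n2)) * x) = _
    rw [map_mul, map_intCast]
    refine Prod.ext ?_ ?_
    · show (a : ZMod n1) * (re x).1 = π1 (re x).1
      rw [hπ1]
    · show (a : ZMod n2) * (re x).2 = π2 (re x).2
      rw [hπ2]
  have hsign : sign π = sign (Equiv.prodCongr π1 π2) :=
    sign_eq_sign_of_equiv _ _ re.toEquiv hequiv
  rw [hsign, sign_prodCongr', ZMod.card, ZMod.card,
    units_pow_odd _ ho2, units_pow_odd _ ho1, Units.val_mul,
    jacobiSym.mul_right, hs1 π1 hπ1, hs2 π2 hπ2]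

lemma key_zolotarev : ∀ (N n : ℕ), n ≤ N → ∀ [NeZero n], Odd n → ∀ (a : ℤ),
    IsCoprime a (n : ℤ) → ∀ (π : Equiv.Perm (ZMod n)),
    (∀ x : ZMod n, π x = (a : ZMod n) * x) → ((sign π : ℤ) = jacobiSym a n) := by
  intro N
  induction N with
  | zero =>
    intro n hle _ _ _ _ _ _
    exact absurd (Nat.le_zero.mp hle) (NeZero.ne n)
  | succ N IHN =>
    intro n hle inst ho a ha π hπ
    have hn : n ≠ 0 := NeZero.ne n
    rcases eq_or_ne n 1 with h1 | h1
    · subst h1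
      have hπ1 : π = 1 := Equiv.ext fun x => Subsingleton.elim _ _
      rw [hπ1, map_one, jacobiSym.one_right]
      rfl
    have hn1 : 1 < n := by omega
    have hp : n.minFac.Prime := Nat.minFac_prime h1
    haveI : Fact n.minFac.Prime := ⟨hp⟩
    have hpdvd : n.minFac ∣ n := Nat.minFac_dvd n
    have hndvd2 : ¬ 2 ∣ n := by
      rcases ho with ⟨t, ht⟩
      omega
    have hp2 : n.minFac ≠ 2 := fun h => hndvd2 (h ▸ hpdvd)
    have hk0 : n.factorization n.minFac ≠ 0 :=
      (Nat.Prime.factorization_pos_of_dvd hp hn hpdvd).ne'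
    have hnm : n.minFac ^ n.factorization n.minFac * (n / n.minFac ^ n.factorization n.minFac)
        = n := Nat.ordProj_mul_ordCompl_eq_self n n.minFac
    rcases eq_or_ne (n / n.minFac ^ n.factorization n.minFac) 1 with hm1 | hm1
    · -- prime power case
      obtain ⟨p, k, hpp, hpp2, rfl⟩ :
          ∃ p k, p.Prime ∧ p ≠ 2 ∧ n = p ^ (k + 1) := by
        refine ⟨n.minFac, n.factorization n.minFac - 1, hp, hp2, ?_⟩
        rw [Nat.sub_add_cancel (Nat.one_le_iff_ne_zero.mpr hk0)]
        rw [hm1, mul_one] at hnm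
        exact hnm.symm
      haveI : Fact p.Prime := ⟨hpp⟩
      haveI : NeZero (p ^ k) := ⟨pow_ne_zero _ hpp.pos.ne'⟩
      refine pp_case p k hpp2 a (by exact_mod_cast ha) π hπ ?_
      intro π' hπ'
      have hlt : p ^ k < p ^ (k + 1) := Nat.pow_lt_pow_succ hpp.one_lt
      have hle' : p ^ k ≤ N := by omega
      have hodd' : Odd (p ^ k) := (hpp.odd_of_ne_two hpp2).pow
      have hdvd : ((p ^ k : ℕ) : ℤ) ∣ ((p ^ (k + 1) : ℕ) : ℤ) := by
        exact_mod_cast Int.natCast_dvd_natCast.mpr (pow_dvd_pow p (Nat.le_succ k))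
      exact IHN (p ^ k) hle' hodd' a (IsCoprime.of_isCoprime_of_dvd_right ha hdvd) π' hπ'
    · -- composite case
      obtain ⟨n1, n2, h11, h12, hco12, rfl⟩ :
          ∃ n1 n2, 1 < n1 ∧ 1 < n2 ∧ n1.Coprime n2 ∧ n = n1 * n2 := by
        refine ⟨n.minFac ^ n.factorization n.minFac,
          n / n.minFac ^ n.factorization n.minFac, ?_, ?_, ?_, hnm.symm⟩
        · exact Nat.one_lt_pow hk0 hp.one_lt
        · rcases Nat.eq_zero_or_pos (n / n.minFac ^ n.factorization n.minFac) with h0 | h0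
          · rw [h0, mul_zero] at hnm; omega
          · omega
        · exact Nat.Coprime.pow_left _ (Nat.coprime_ordCompl hp hn)
      haveI : NeZero n1 := ⟨by positivity⟩
      haveI : NeZero n2 := ⟨by positivity⟩
      have ho12 := Nat.odd_mul.mp ho
      have ho1 : Odd n1 := ho12.1
      have ho2 : Odd n2 := ho12.2
      refine crt_case n1 n2 hco12 ho1 ho2 a (by exact_mod_cast ha) π hπ ?_ ?_
      · intro π1 hπ1
        have hlt : n1 < n1 * n2 := by
          have h := (Nat.mul_lt_mul_left (show 0 < n1 by omega)).mpr h12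
          simpa using h
        have hd : ((n1 : ℕ) : ℤ) ∣ ((n1 * n2 : ℕ) : ℤ) := by
          exact_mod_cast Int.natCast_dvd_natCast.mpr (Dvd.intro n2 rfl)
        exact IHN n1 (by omega) ho1 a (IsCoprime.of_isCoprime_of_dvd_right ha hd) π1 hπ1
      · intro π2 hπ2
        have hlt : n2 < n1 * n2 := by
          have h := (Nat.mul_lt_mul_right (show 0 < n2 by omega)).mpr h11
          simpa using h
        have hd : ((n2 : ℕ) : ℤ) ∣ ((n1 * n2 : ℕ) : ℤ) := by
          exact_mod_cast Int.natCast_dvd_natCast.mpr (Dvd.intro_left n1 rfl)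
        exact IHN n2 (by omega) ho2 a (IsCoprime.of_isCoprime_of_dvd_right ha hd) π2 hπ2

theorem stmt6 (m : ℕ) [NeZero m] (hm : Odd m) (a : ℤ) (ha : IsCoprime a (m : ℤ))
    (π : Equiv.Perm (ZMod m)) (hπ : ∀ x : ZMod m, π x = (a : ZMod m) * x) :
    (Equiv.Perm.sign π : ℤ) = jacobiSym a m :=
  key_zolotarev m m le_rfl hm a ha π hπ
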